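/- Let c > 0, x ∈ ℝ, let p, F be complex-valued functions, and let λ ≠ μ in ℂ and t ∈ ℂ satisfy Re(c + it(λ−μ)) > 0 and Re(c − it(λ−μ)) > 0. Define S(λ,μ) = −(c F(λ)/(2iπ)) · ∫₀^∞ s e^{−cs} [ e^{(ix/2)(p(μ)−p(λ))} e^{−ist(λ−μ)} + e^{(ix/2)(p(λ)−p(μ))} e^{ist(λ−μ)} ] ds. Then for any counterclockwise circle Γ of center z₀ and radius R with |λ − z₀| < R and |μ − z₀| < R, one has ∂_t V_t(λ,μ) = − (1/(2π)) ∮_Γ z/((z−λ)(z−μ)) dz · S(λ,μ). -/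

import Mathlib

open Complex MeasureTheory Set Filter

private lemma tendsto_mul_exp_neg_aux (b : ℝ) (hb : 0 < b) :
    Tendsto (fun s : ℝ => s * Real.exp (-(b * s))) atTop (nhds 0) := by
  have h1 : Tendsto (fun x : ℝ => x ^ 1 * Real.exp (-x)) atTop (nhds 0) :=
    Real.tendsto_pow_mul_exp_neg_atTop_nhds_zero 1
  have h2 : Tendsto (fun s : ℝ => b * s) atTop atTop :=
    Tendsto.const_mul_atTop hb tendsto_id
  have h3 := ((h1.comp h2).const_mul (1 / b))
  rw [mul_zero] at h3
  refine h3.congr fun s => ?_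
  simp only [Function.comp, pow_one]
  field_simp

private lemma integrable_mul_exp_neg_aux (a : ℂ) (ha : 0 < a.re) :
    IntegrableOn (fun s : ℝ => (s : ℂ) * Complex.exp (-a * s)) (Ioi 0) := by
  have hcont : ContinuousOn (fun s : ℝ => s * Real.exp (-(a.re * s))) (Ici 0) :=
    (continuous_id.mul (Real.continuous_exp.comp (continuous_const.mul continuous_id).neg)).continuousOn
  have hbig : (fun s : ℝ => s * Real.exp (-(a.re * s))) =O[atTop]
      fun s : ℝ => Real.exp (-(a.re / 2) * s) := by
    have ht : Tendsto (fun s : ℝ => (s * Real.exp (-(a.re * s))) / Real.exp (-(a.re / 2) * s))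
        atTop (nhds 0) := by
      refine (tendsto_mul_exp_neg_aux (a.re / 2) (by linarith)).congr fun s => ?_
      rw [eq_div_iff (Real.exp_ne_zero _), mul_assoc, ← Real.exp_add]
      ring_nf
    exact (Asymptotics.isLittleO_iff_tendsto fun s h =>
      absurd h (Real.exp_ne_zero _)).mpr ht |>.isBigO
  have hreal : IntegrableOn (fun s : ℝ => s * Real.exp (-(a.re * s))) (Ioi 0) :=
    integrable_of_isBigO_exp_neg (by linarith : (0:ℝ) < a.re / 2) hcont hbig
  refine Integrable.mono' hreal ?_ ?_
  · exact (Complex.continuous_ofReal.mul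
      (Complex.continuous_exp.comp (continuous_const.mul Complex.continuous_ofReal))).aestronglyMeasurable.restrict
  · filter_upwards [ae_restrict_mem measurableSet_Ioi] with s hs
    have hs0 : (0:ℝ) ≤ s := le_of_lt hs
    have hre : (-a * (s : ℂ)).re = -(a.re * s) := by simp [Complex.mul_re]
    simp [norm_mul, Complex.norm_exp, hre,
      _root_.abs_of_nonneg hs0]

private lemma integral_mul_exp_neg_aux (a : ℂ) (ha : 0 < a.re) :
    ∫ s in Ioi (0 : ℝ), (s : ℂ) * Complex.exp (-a * s) = 1 / a ^ 2 := by
  have ha0 : a ≠ 0 := fun h => by simp [h] at ha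
  set f : ℝ → ℂ := fun s => -(((s : ℂ) / a + 1 / a ^ 2) * Complex.exp (-a * s)) with hf
  have hderiv : ∀ s : ℝ, s ∈ Ici (0:ℝ) →
      HasDerivAt f ((s : ℂ) * Complex.exp (-a * s)) s := by
    intro s _
    have he : HasDerivAt (fun z : ℂ => -((z / a + 1 / a ^ 2) * Complex.exp (-a * z)))
        ((s : ℂ) * Complex.exp (-a * s)) (s : ℂ) := by
      have h1 : HasDerivAt (fun z : ℂ => z / a + 1 / a ^ 2) (1 / a) (s : ℂ) :=
        ((hasDerivAt_id ((s : ℂ))).div_const a).add_const (1 / a ^ 2)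
      have h2 : HasDerivAt (fun z : ℂ => Complex.exp (-a * z))
          (Complex.exp (-a * s) * -a) (s : ℂ) := by
        simpa [mul_comm] using (((hasDerivAt_id ((s : ℂ))).const_mul (-a))).cexp
      have := ((h1.mul h2)).neg
      refine this.congr_deriv ?_
      field_simp
      ring
    exact he.comp_ofReal
  have htend : Tendsto f atTop (nhds 0) := by
    apply squeeze_zero_norm' (a := fun s : ℝ => (s / ‖a‖ + ‖1 / a ^ 2‖) * Real.exp (-(a.re * s)))
    · filter_upwards [Filter.eventually_ge_atTop (0:ℝ)] with s hs0
      rw [hf]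
      have hre : (-a * (s : ℂ)).re = -(a.re * s) := by simp [Complex.mul_re]
      simp only [norm_neg, norm_mul, Complex.norm_exp, hre]
      gcongr
      refine (norm_add_le _ _).trans ?_
      gcongr
      simp [norm_div, Complex.norm_real, _root_.abs_of_nonneg hs0]
    · have h1 : Tendsto (fun s : ℝ => (1 / ‖a‖) * (s * Real.exp (-(a.re * s)))) atTop (nhds 0) := by
        have h := (tendsto_mul_exp_neg_aux a.re ha).const_mul (1 / ‖a‖)
        rwa [mul_zero] at h
      have h2 : Tendsto (fun s : ℝ => ‖1 / a ^ 2‖ * Real.exp (-(a.re * s))) atTop (nhds 0) := by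
        have hexp : Tendsto (fun s : ℝ => Real.exp (-(a.re * s))) atTop (nhds 0) := by
          apply Real.tendsto_exp_atBot.comp
          exact tendsto_neg_atTop_atBot.comp (Tendsto.const_mul_atTop ha tendsto_id)
        have h := hexp.const_mul ‖1 / a ^ 2‖
        rwa [mul_zero] at h
      have := h1.add h2
      rw [add_zero] at this
      refine this.congr fun s => ?_
      ring
  have := integral_Ioi_of_hasDerivAt_of_tendsto'
    (fun s hs => hderiv s hs) (integrable_mul_exp_neg_aux a ha) htend
  rw [this, hf]
  simp

theorem stmt14 (c x : ℝ) (hc : 0 < c) (p F : ℂ → ℂ) (lam mu : ℂ) (hne : lam ≠ mu)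
    (t : ℂ)
    (h1 : 0 < ((c : ℂ) + Complex.I * t * (lam - mu)).re)
    (h2 : 0 < ((c : ℂ) - Complex.I * t * (lam - mu)).re)
    (z₀ : ℂ) (R : ℝ) (hlam : ‖lam - z₀‖ < R) (hmu : ‖mu - z₀‖ < R) :
    HasDerivAt
      (fun s : ℂ =>
        (Complex.I * c * F lam) / (2 * Real.pi * Complex.I * (lam - mu)) *
          (Complex.exp ((Complex.I * x / 2) * (p lam - p mu)) / (s * (lam - mu) + Complex.I * c)
            + Complex.exp ((Complex.I * x / 2) * (p mu - p lam)) / (s * (lam - mu) - Complex.I * c)))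
      (-(1 / (2 * Real.pi)) * (∮ z in C(z₀, R), z / ((z - lam) * (z - mu))) *
        (-(c * F lam / (2 * Real.pi * Complex.I)) *
          ∫ s in Ioi (0 : ℝ), (s : ℂ) * Complex.exp (-(c : ℂ) * s) *
            (Complex.exp ((Complex.I * x / 2) * (p mu - p lam)) *
                Complex.exp (-(Complex.I * s * t * (lam - mu)))
              + Complex.exp ((Complex.I * x / 2) * (p lam - p mu)) *
                Complex.exp (Complex.I * s * t * (lam - mu)))))
      t := by
  have hR : 0 < R := lt_of_le_of_lt (norm_nonneg _) hlam
  set d : ℂ := lam - mu with hd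
  have hd0 : d ≠ 0 := sub_ne_zero.mpr hne
  set A : ℂ := Complex.exp ((Complex.I * x / 2) * (p lam - p mu)) with hA
  set B : ℂ := Complex.exp ((Complex.I * x / 2) * (p mu - p lam)) with hB
  set a : ℂ := (c : ℂ) + Complex.I * t * d with ha
  set b : ℂ := (c : ℂ) - Complex.I * t * d with hb
  have ha0 : a ≠ 0 := fun h => by rw [h] at h1; simp at h1
  have hb0 : b ≠ 0 := fun h => by rw [h] at h2; simp at h2
  -- circle integral
  have hcirc : (∮ z in C(z₀, R), z / ((z - lam) * (z - mu))) = 2 * Real.pi * Complex.I := by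
    have hlam' : lam ∈ Metric.ball z₀ R := by
      rwa [Metric.mem_ball, dist_eq_norm]
    have hmu' : mu ∈ Metric.ball z₀ R := by
      rwa [Metric.mem_ball, dist_eq_norm]
    have heq : EqOn (fun z : ℂ => z / ((z - lam) * (z - mu)))
        (fun z : ℂ => (lam / (lam - mu)) • (z - lam)⁻¹ - (mu / (lam - mu)) • (z - mu)⁻¹)
        (Metric.sphere z₀ R) := by
      intro z hz
      have hzlam : z ≠ lam := by
        intro h; rw [h] at hz
        rw [mem_sphere_iff_norm] at hz
        rw [hz] at hlam; exact lt_irrefl _ hlam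
      have hzmu : z ≠ mu := by
        intro h; rw [h] at hz
        rw [mem_sphere_iff_norm] at hz
        rw [hz] at hmu; exact lt_irrefl _ hmu
      have h1' : z - lam ≠ 0 := sub_ne_zero.mpr hzlam
      have h2' : z - mu ≠ 0 := sub_ne_zero.mpr hzmu
      simp only [smul_eq_mul]
      have h3' : lam - mu ≠ 0 := sub_ne_zero.mpr hne
      have h4' : mu - lam ≠ 0 := sub_ne_zero.mpr (Ne.symm hne)
      field_simp
      ring
    rw [circleIntegral.integral_congr hR.le heq]
    have hmem : ∀ w : ℂ, ‖w - z₀‖ < R → w ∉ Metric.sphere z₀ |R| := by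
      intro w hw h
      rw [Metric.mem_sphere, dist_eq_norm, abs_of_pos hR] at h
      rw [h] at hw
      exact lt_irrefl _ hw
    have hb1 : CircleIntegrable (fun z : ℂ => (z - lam)⁻¹) z₀ R :=
      circleIntegrable_sub_inv_iff.mpr (Or.inr (hmem lam hlam))
    have hb2 : CircleIntegrable (fun z : ℂ => (z - mu)⁻¹) z₀ R :=
      circleIntegrable_sub_inv_iff.mpr (Or.inr (hmem mu hmu))
    have hint1 : CircleIntegrable (fun z : ℂ => (lam / (lam - mu)) • (z - lam)⁻¹) z₀ R :=
      IntervalIntegrable.smul hb1 (lam / (lam - mu))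
    have hint2 : CircleIntegrable (fun z : ℂ => (mu / (lam - mu)) • (z - mu)⁻¹) z₀ R :=
      IntervalIntegrable.smul hb2 (mu / (lam - mu))
    rw [circleIntegral.integral_sub hint1 hint2, circleIntegral.integral_smul,
      circleIntegral.integral_smul, circleIntegral.integral_sub_inv_of_mem_ball hlam',
      circleIntegral.integral_sub_inv_of_mem_ball hmu']
    have h3' : lam - mu ≠ 0 := sub_ne_zero.mpr hne
    have h4' : mu - lam ≠ 0 := sub_ne_zero.mpr (Ne.symm hne)
    simp only [smul_eq_mul]
    field_simp
  -- s-integral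
  have hint : (∫ s in Ioi (0 : ℝ), (s : ℂ) * Complex.exp (-(c : ℂ) * s) *
      (B * Complex.exp (-(Complex.I * s * t * d)) + A * Complex.exp (Complex.I * s * t * d)))
      = B * (1 / a ^ 2) + A * (1 / b ^ 2) := by
    have hcongr : ∀ s : ℝ, (s : ℂ) * Complex.exp (-(c : ℂ) * s) *
        (B * Complex.exp (-(Complex.I * s * t * d)) + A * Complex.exp (Complex.I * s * t * d))
        = B * ((s : ℂ) * Complex.exp (-a * s)) + A * ((s : ℂ) * Complex.exp (-b * s)) := by
      intro s
      have h1e : Complex.exp (-(c:ℂ) * s) * Complex.exp (-(Complex.I * s * t * d))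
          = Complex.exp (-a * s) := by
        rw [← Complex.exp_add]; congr 1; rw [ha]; ring
      have h2e : Complex.exp (-(c:ℂ) * s) * Complex.exp (Complex.I * s * t * d)
          = Complex.exp (-b * s) := by
        rw [← Complex.exp_add]; congr 1; rw [hb]; ring
      rw [← h1e, ← h2e]
      ring
    rw [integral_congr_ae (Filter.Eventually.of_forall fun s => hcongr s)]
    rw [integral_add ((integrable_mul_exp_neg_aux a h1).const_mul B)
      ((integrable_mul_exp_neg_aux b h2).const_mul A),
      integral_const_mul, integral_const_mul,
      integral_mul_exp_neg_aux a h1, integral_mul_exp_neg_aux b h2]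
  -- derivative of the left side
  have hIb : t * d + Complex.I * c = Complex.I * b := by
    linear_combination (-Complex.I) * hb + t * d * Complex.I_sq
  have hIa : t * d - Complex.I * c = -(Complex.I * a) := by
    linear_combination Complex.I * ha + t * d * Complex.I_sq
  have hden1 : t * d + Complex.I * c ≠ 0 := by
    rw [hIb]; exact mul_ne_zero Complex.I_ne_zero hb0
  have hden2 : t * d - Complex.I * c ≠ 0 := by
    rw [hIa]; exact neg_ne_zero.mpr (mul_ne_zero Complex.I_ne_zero ha0)
  set K : ℂ := (Complex.I * c * F lam) / (2 * Real.pi * Complex.I * d) with hK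
  have hf1 : HasDerivAt (fun s : ℂ => s * d + Complex.I * c) d t := by
    simpa using ((hasDerivAt_id t).mul_const d).add_const (Complex.I * c)
  have hf2 : HasDerivAt (fun s : ℂ => s * d - Complex.I * c) d t := by
    simpa using ((hasDerivAt_id t).mul_const d).sub_const (Complex.I * c)
  have hD := (((hf1.inv hden1).const_mul A).add ((hf2.inv hden2).const_mul B)).const_mul K
  rw [hcirc, hint]
  have hpi : (Real.pi : ℂ) ≠ 0 := Complex.ofReal_ne_zero.mpr Real.pi_ne_zero
  have hsq1 : (t * d + Complex.I * c) ^ 2 = -(b ^ 2) := by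
    rw [hIb, mul_pow, Complex.I_sq]; ring
  have hsq2 : (t * d - Complex.I * c) ^ 2 = -(a ^ 2) := by
    rw [hIa, neg_pow, mul_pow, Complex.I_sq]; ring
  clear_value K A B a b d
  refine hD.congr_deriv ?_
  rw [hK, hsq1, hsq2, neg_div_neg_eq, neg_div_neg_eq]
  have e1 : ∀ S : ℂ, -(1 / (2 * (Real.pi:ℂ))) * (2 * Real.pi * Complex.I) *
      (-((c:ℂ) * F lam / (2 * Real.pi * Complex.I)) * S)
      = (c:ℂ) * F lam / (2 * Real.pi) * S := by
    intro S
    field_simp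
  have e2 : Complex.I * (c:ℂ) * F lam / (2 * (Real.pi:ℂ) * Complex.I * d) *
      (A * (d / b ^ 2) + B * (d / a ^ 2))
      = Complex.I * (c:ℂ) * F lam / (2 * Real.pi * Complex.I) * (A / b ^ 2 + B / a ^ 2) := by
    rw [← div_div]
    generalize Complex.I * (c:ℂ) * F lam / (2 * (Real.pi:ℂ) * Complex.I) = K2
    field_simp
  have e3 : Complex.I * (c:ℂ) * F lam / (2 * (Real.pi:ℂ) * Complex.I) = (c:ℂ) * F lam / (2 * Real.pi) := by
    rw [show Complex.I * (c:ℂ) * F lam = (c:ℂ) * F lam * Complex.I by ring,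
      mul_div_mul_right _ _ Complex.I_ne_zero]
  rw [e1, e2, e3]
  ring
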